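/- Uniform approximation of a compact family of continuous functions by a single-hidden-layer network with shared inner parameters (Chen–Chen): Suppose K ⊆ ℝ^n is compact, 𝒮 is a compact subset of C(K), and g : ℝ → ℝ is a Tauber–Wiener function. Then for every ε > 0 there exist a positive integer N, real numbers θ_i, and vectors ω_i ∈ ℝ^n (i = 1,…,N), all independent of f, together with continuous linear functionals c_i on C(K) (i = 1,…,N), such that |f(x) − Σ_{i=1}^N c_i(f) g(ω_i · x + θ_i)| < ε holds for all x ∈ K and all f ∈ 𝒮. -/

import Mathlib

open scoped BigOperators

/-- A function `g : ℝ → ℝ` is a Tauber–Wiener function if for every interval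
`[a,b]`, finite linear combinations `∑ cᵢ g (λᵢ x + θᵢ)` are dense in `C[a,b]`
with respect to the supremum norm. -/
def TauberWiener (g : ℝ → ℝ) : Prop :=
  ∀ a b : ℝ, a < b → ∀ f : ℝ → ℝ, ContinuousOn f (Set.Icc a b) →
    ∀ ε : ℝ, 0 < ε → ∃ N : ℕ, 0 < N ∧ ∃ c lam θ : Fin N → ℝ,
      ∀ x ∈ Set.Icc a b, |f x - ∑ i : Fin N, c i * g (lam i * x + θ i)| < ε



noncomputable def expRidge (n : ℕ) (K : Set (Fin n → ℝ)) (w : Fin n → ℝ) : C(K, ℝ) :=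
  ⟨fun x => Real.exp (∑ j, w j * (x : Fin n → ℝ) j),
    Real.continuous_exp.comp <| continuous_finset_sum _ fun j _ =>
      continuous_const.mul ((continuous_apply j).comp continuous_subtype_val)⟩

lemma expRidge_apply (n : ℕ) (K : Set (Fin n → ℝ)) (w : Fin n → ℝ) (x : K) :
    expRidge n K w x = Real.exp (∑ j, w j * (x : Fin n → ℝ) j) := rfl

lemma expRidge_one (n : ℕ) (K : Set (Fin n → ℝ)) : expRidge n K 0 = 1 := by
  ext x; simp [expRidge_apply]

lemma expRidge_mul (n : ℕ) (K : Set (Fin n → ℝ)) (w w' : Fin n → ℝ) :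
    expRidge n K w * expRidge n K w' = expRidge n K (w + w') := by
  ext x
  simp [expRidge_apply, ← Real.exp_add, ← Finset.sum_add_distrib, add_mul]

lemma exp_ridge_dense (n : ℕ) (K : Set (Fin n → ℝ)) [CompactSpace K]
    (h : C(K, ℝ)) (η : ℝ) (hη : 0 < η) :
    ∃ (M : ℕ) (a : Fin M → ℝ) (w : Fin M → Fin n → ℝ),
      ∀ x : K, |h x - ∑ k : Fin M, a k * Real.exp (∑ j, w k j * (x : Fin n → ℝ) j)| < η := by
  set S : Set C(K, ℝ) := Set.range (expRidge n K) with hS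
  -- S is a submonoid
  have hone : (1 : C(K, ℝ)) ∈ S := ⟨0, (expRidge_one n K).symm ▸ rfl⟩
  have hmul : ∀ p ∈ S, ∀ q ∈ S, p * q ∈ S := by
    rintro p ⟨w, rfl⟩ q ⟨w', rfl⟩
    exact ⟨w + w', (expRidge_mul n K w w').symm⟩
  -- separates points
  have hsep : (Algebra.adjoin ℝ S).SeparatesPoints := by
    intro x y hxy
    have : (x : Fin n → ℝ) ≠ y := Subtype.coe_injective.ne hxy
    obtain ⟨j, hj⟩ := Function.ne_iff.mp this
    refine ⟨_, ⟨expRidge n K (Pi.single j 1), Algebra.subset_adjoin ⟨_, rfl⟩, rfl⟩, ?_⟩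
    have key : ∀ z : K, expRidge n K (Pi.single j 1) z = Real.exp ((z : Fin n → ℝ) j) := by
      intro z
      rw [expRidge_apply]
      congr 1
      rw [Finset.sum_eq_single j]
      · simp
      · intro b _ hb; simp [Pi.single_apply, hb]
      · simp
    show expRidge n K (Pi.single j 1) x ≠ expRidge n K (Pi.single j 1) y
    rw [key, key]
    simp only [ne_eq, Real.exp_eq_exp]
    exact hj
  have hcl := ContinuousMap.subalgebra_topologicalClosure_eq_top_of_separatesPoints _ hsep
  have hmem : h ∈ closure (Algebra.adjoin ℝ S : Set C(K, ℝ)) := by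
    have : h ∈ (Algebra.adjoin ℝ S).topologicalClosure := hcl ▸ trivial
    exact this
  obtain ⟨p, hpA, hdist⟩ := Metric.mem_closure_iff.mp hmem η hη
  -- p is in the span of S
  have hspan : p ∈ Submodule.span ℝ S := by
    have h1 : Submonoid.closure S ≤ ⟨⟨S, fun {a b} ha hb => hmul a ha b hb⟩, hone⟩ :=
      Submonoid.closure_le.mpr le_rfl
    have h2 : p ∈ Submodule.span ℝ (Submonoid.closure S : Set C(K, ℝ)) := by
      rw [← Algebra.adjoin_eq_span]; exact hpA
    exact Submodule.span_mono h1 h2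
  obtain ⟨c, hsupp, hsum⟩ := Submodule.mem_span_set.mp hspan
  -- enumerate
  set T := c.support with hT
  have hW : ∀ q : T, ∃ w : Fin n → ℝ, expRidge n K w = (q : C(K, ℝ)) := fun q => hsupp q.2
  choose W hWspec using hW
  set M := T.card with hM
  let e : Fin M ≃ T := T.equivFin.symm
  refine ⟨M, fun i => c (e i), fun i => W (e i), fun x => ?_⟩
  have hpx : p x = ∑ i : Fin M, c (e i) * Real.exp (∑ j, W (e i) j * (x : Fin n → ℝ) j) := by
    have : p x = ∑ q ∈ T, c q * q x := by
      rw [← hsum, Finsupp.sum]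
      simp
      rfl
    rw [this, ← Finset.sum_coe_sort T (fun q => c q * q x),
      ← e.sum_comp (fun q : T => c (q : C(K,ℝ)) * (q : C(K,ℝ)) x)]
    refine Finset.sum_congr rfl fun i _ => ?_
    rw [← hWspec (e i), expRidge_apply]
  rw [← hpx]
  calc |h x - p x| = dist (h x) (p x) := (Real.dist_eq _ _).symm
    _ ≤ dist h p := ContinuousMap.dist_apply_le_dist x
    _ < η := hdist

lemma ridge_dense (n : ℕ) (K : Set (Fin n → ℝ)) [CompactSpace K]
    (g : ℝ → ℝ) (hg : TauberWiener g) (h : C(K, ℝ)) (η : ℝ) (hη : 0 < η) :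
    ∃ (N : ℕ) (cc θ : Fin N → ℝ) (ω : Fin N → Fin n → ℝ),
      ∀ x : K, |h x - ∑ i, cc i * g ((∑ j, ω i j * (x : Fin n → ℝ) j) + θ i)| < η := by
  obtain ⟨M, a, w, hMa⟩ := exp_ridge_dense n K h (η / 2) (by linarith)
  let L : Fin M → C(K, ℝ) := fun k => ⟨fun x => ∑ j, w k j * (x : Fin n → ℝ) j,
    continuous_finset_sum _ fun j _ =>
      continuous_const.mul ((continuous_apply j).comp continuous_subtype_val)⟩
  set ε' : Fin M → ℝ := fun k => η / (2 * (M + 1) * (|a k| + 1)) with hε'def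
  have hε' : ∀ k, 0 < ε' k := fun k => by
    have h1 : (0:ℝ) < |a k| + 1 := by positivity
    have h2 : (0:ℝ) < 2 * ((M:ℝ) + 1) := by positivity
    simp only [hε'def]
    positivity
  have hTW : ∀ k : Fin M, ∃ Nk : ℕ, 0 < Nk ∧ ∃ ck lamk θk : Fin Nk → ℝ,
      ∀ t ∈ Set.Icc (-(‖L k‖ + 1)) (‖L k‖ + 1),
        |Real.exp t - ∑ i, ck i * g (lamk i * t + θk i)| < ε' k := by
    intro k
    have hb : -(‖L k‖ + 1) < ‖L k‖ + 1 := by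
      have := norm_nonneg (L k); linarith
    exact hg _ _ hb Real.exp Real.continuous_exp.continuousOn _ (hε' k)
  choose Nk hNkpos ck lamk θk hck using hTW
  -- sigma index
  let ι := Σ k : Fin M, Fin (Nk k)
  let e : Fin (Fintype.card ι) ≃ ι := (Fintype.equivFin ι).symm
  let C : ι → ℝ := fun s => a s.1 * ck s.1 s.2
  let Θ : ι → ℝ := fun s => θk s.1 s.2
  let Ω : ι → Fin n → ℝ := fun s j => lamk s.1 s.2 * w s.1 j
  refine ⟨Fintype.card ι, fun i => C (e i), fun i => Θ (e i), fun i => Ω (e i), fun x => ?_⟩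
  have hsum : ∑ i, C (e i) * g ((∑ j, Ω (e i) j * (x : Fin n → ℝ) j) + Θ (e i))
      = ∑ k : Fin M, a k * ∑ i : Fin (Nk k),
          ck k i * g (lamk k i * L k x + θk k i) := by
    rw [e.sum_comp (fun s : ι => C s * g ((∑ j, Ω s j * (x : Fin n → ℝ) j) + Θ s))]
    rw [← Finset.univ_sigma_univ, ← Finset.sum_sigma' Finset.univ (fun _ => Finset.univ)
      (fun k i => C ⟨k, i⟩ * g ((∑ j, Ω ⟨k, i⟩ j * (x : Fin n → ℝ) j) + Θ ⟨k, i⟩))]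
    refine Finset.sum_congr rfl fun k _ => ?_
    rw [Finset.mul_sum]
    refine Finset.sum_congr rfl fun i _ => ?_
    have harg : (∑ j, Ω ⟨k, i⟩ j * (x : Fin n → ℝ) j) = lamk k i * L k x := by
      show (∑ j, lamk k i * w k j * (x : Fin n → ℝ) j) = lamk k i * ∑ j, w k j * (x : Fin n → ℝ) j
      rw [Finset.mul_sum]
      exact Finset.sum_congr rfl fun j _ => by ring
    rw [harg]
    show a k * ck k i * _ = a k * (ck k i * _)
    ring
  rw [hsum]
  have hterm : ∀ k : Fin M,
      |a k * Real.exp (L k x) - a k * ∑ i, ck k i * g (lamk k i * L k x + θk k i)|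
        ≤ η / (2 * (M + 1)) := by
    intro k
    have hmem : L k x ∈ Set.Icc (-(‖L k‖ + 1)) (‖L k‖ + 1) := by
      have := (L k).norm_coe_le_norm x
      rw [Real.norm_eq_abs] at this
      constructor
      · have := abs_le.mp this; linarith [this.1]
      · have := abs_le.mp this; linarith [this.2]
    have h1 := hck k (L k x) hmem
    rw [← mul_sub, abs_mul]
    have h2 : |a k| * |Real.exp (L k x) - ∑ i, ck k i * g (lamk k i * L k x + θk k i)|
        ≤ |a k| * ε' k := by
      exact mul_le_mul_of_nonneg_left h1.le (abs_nonneg _)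
    refine h2.trans ?_
    have hA : (0:ℝ) ≤ |a k| := abs_nonneg _
    have hA1 : (0:ℝ) < |a k| + 1 := by linarith
    have hm1 : (0:ℝ) < 2 * ((M:ℝ) + 1) := by positivity
    simp only [hε'def]
    rw [mul_div_assoc', div_le_div_iff₀ (by positivity) hm1]
    nlinarith [mul_nonneg hη.le hm1.le]
  have key : |h x - ∑ k : Fin M, a k * ∑ i, ck k i * g (lamk k i * L k x + θk k i)|
      ≤ |h x - ∑ k : Fin M, a k * Real.exp (L k x)|
        + ∑ k : Fin M, |a k * Real.exp (L k x)
            - a k * ∑ i, ck k i * g (lamk k i * L k x + θk k i)| := by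
    have : h x - ∑ k : Fin M, a k * ∑ i, ck k i * g (lamk k i * L k x + θk k i)
        = (h x - ∑ k : Fin M, a k * Real.exp (L k x))
          + ∑ k : Fin M, (a k * Real.exp (L k x)
            - a k * ∑ i, ck k i * g (lamk k i * L k x + θk k i)) := by
      rw [Finset.sum_sub_distrib]; ring
    rw [this]
    exact (abs_add_le _ _).trans (by gcongr; exact Finset.abs_sum_le_sum_abs _ _)
  have hE : |h x - ∑ k : Fin M, a k * Real.exp (L k x)| < η / 2 := hMa x
  have hS : ∑ k : Fin M, |a k * Real.exp (L k x)
      - a k * ∑ i, ck k i * g (lamk k i * L k x + θk k i)| ≤ η / 2 := by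
    calc _ ≤ ∑ _k : Fin M, η / (2 * (M + 1)) := Finset.sum_le_sum fun k _ => hterm k
      _ = M * (η / (2 * (M + 1))) := by rw [Finset.sum_const, Finset.card_univ,
          Fintype.card_fin, nsmul_eq_mul]
      _ ≤ η / 2 := by
          rw [mul_div_assoc', div_le_div_iff₀ (by positivity) (by norm_num : (0:ℝ) < 2)]
          nlinarith [hη.le]
  linarith [key, hE, hS]

/-- Chen–Chen: uniform approximation of a compact family of continuous
functions by a single-hidden-layer network with shared inner parameters, the
outer coefficients being continuous linear functionals of the target. -/
theorem chen_chen_function_approximation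
    (n : ℕ) (K : Set (Fin n → ℝ)) (hK : IsCompact K)
    (𝒮 : Set C(K, ℝ)) (h𝒮 : IsCompact 𝒮)
    (g : ℝ → ℝ) (hg : TauberWiener g) (ε : ℝ) (hε : 0 < ε) :
    ∃ N : ℕ, 0 < N ∧ ∃ (θ : Fin N → ℝ) (ω : Fin N → Fin n → ℝ)
      (c : Fin N → (C(K, ℝ) →L[ℝ] ℝ)),
      ∀ f ∈ 𝒮, ∀ x : K,
        |f x - ∑ i : Fin N,
          c i f * g ((∑ j : Fin n, ω i j * (x : Fin n → ℝ) j) + θ i)| < ε := by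
  rcases isEmpty_or_nonempty K with hKe | hKne
  · exact ⟨1, one_pos, 0, 0, 0, fun f hf x => (IsEmpty.false x).elim⟩
  rcases 𝒮.eq_empty_or_nonempty with hSe | hSne
  · exact ⟨1, one_pos, 0, 0, 0, fun f hf x => by simp [hSe] at hf⟩
  haveI : CompactSpace K := isCompact_iff_compactSpace.mp hK
  set ε8 := ε / 8 with hε8def
  have hε8 : 0 < ε8 := by positivity
  -- uniform bound on 𝒮
  obtain ⟨r, hr⟩ := h𝒮.isBounded.subset_closedBall 0
  set M := max r 0 with hMdef
  have hM0 : (0:ℝ) ≤ M := le_max_right r 0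
  have hMb : ∀ f ∈ 𝒮, ∀ z : K, |f z| ≤ M := by
    intro f hf z
    have h1 : dist f 0 ≤ r := Metric.mem_closedBall.mp (hr hf)
    rw [dist_zero_right] at h1
    have h2 := f.norm_coe_le_norm z
    rw [Real.norm_eq_abs] at h2
    exact h2.trans (h1.trans (le_max_left r 0))
  -- equicontinuity via finite net
  obtain ⟨t, htfin, htsub⟩ := Metric.totallyBounded_iff.mp h𝒮.totallyBounded ε8 hε8
  have hUC : ∀ p : C(K, ℝ), ∃ d : ℝ, 0 < d ∧
      ∀ x y : K, dist x y < d → dist (p x) (p y) < ε8 := by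
    intro p
    obtain ⟨d, hd, hprop⟩ := Metric.uniformContinuous_iff.mp
      (CompactSpace.uniformContinuous_of_continuous p.continuous) ε8 hε8
    exact ⟨d, hd, fun x y h => hprop h⟩
  choose D hD0 hDp using hUC
  set F := htfin.toFinset with hFdef
  have hFne : F.Nonempty := by
    obtain ⟨f0, hf0⟩ := hSne
    obtain ⟨p, hp, -⟩ := Set.mem_iUnion₂.mp (htsub hf0)
    exact ⟨p, htfin.mem_toFinset.mpr hp⟩
  set δ := F.inf' hFne D with hδdef
  have hδ0 : 0 < δ := (Finset.lt_inf'_iff hFne).mpr fun p _ => hD0 p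
  have equic : ∀ f ∈ 𝒮, ∀ x y : K, dist x y < δ → |f x - f y| < 3 * ε8 := by
    intro f hf x y hxy
    obtain ⟨p, hpt, hfp⟩ := Set.mem_iUnion₂.mp (htsub hf)
    rw [Metric.mem_ball] at hfp
    have hfp' : ∀ z : K, |f z - p z| < ε8 := fun z => by
      have h1 : dist (f z) (p z) ≤ dist f p := ContinuousMap.dist_apply_le_dist z
      rw [Real.dist_eq] at h1
      exact h1.trans_lt hfp
    have hp2 : dist (p x) (p y) < ε8 :=
      hDp p x y (hxy.trans_le (Finset.inf'_le D (htfin.mem_toFinset.mpr hpt)))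
    rw [Real.dist_eq] at hp2
    have h3 : |f x - f y| ≤ |f x - p x| + |p x - f y| := abs_sub_le _ _ _
    have h4 : |p x - f y| ≤ |p x - p y| + |p y - f y| := abs_sub_le _ _ _
    have h5 : |p y - f y| = |f y - p y| := abs_sub_comm _ _
    have := hfp' x; have := hfp' y
    linarith
  -- finite δ-net of K
  obtain ⟨t', ht'fin, ht'sub⟩ := Metric.totallyBounded_iff.mp (isCompact_univ : IsCompact (Set.univ : Set K)).totallyBounded δ hδ0
  set F' := ht'fin.toFinset with hF'def
  have hF'ne : F'.Nonempty := by
    obtain ⟨x0⟩ := hKne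
    obtain ⟨y, hy, -⟩ := Set.mem_iUnion₂.mp (ht'sub (Set.mem_univ x0))
    exact ⟨y, ht'fin.mem_toFinset.mpr hy⟩
  set m := F'.card with hmdef
  let e' : Fin m ≃ F' := F'.equivFin.symm
  let pts : Fin m → K := fun i => (e' i : K)
  have cover : ∀ z : K, ∃ i : Fin m, dist z (pts i) < δ := by
    intro z
    obtain ⟨y, hy, hzy⟩ := Set.mem_iUnion₂.mp (ht'sub (Set.mem_univ z))
    refine ⟨e'.symm ⟨y, ht'fin.mem_toFinset.mpr hy⟩, ?_⟩
    have : pts (e'.symm ⟨y, ht'fin.mem_toFinset.mpr hy⟩) = y := by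
      simp [pts, Equiv.apply_symm_apply]
    rw [this]
    exact Metric.mem_ball.mp hzy
  -- partition of unity
  let ψ : Fin m → K → ℝ := fun i z => max (δ - dist z (pts i)) 0
  have hψcont : ∀ i, Continuous (ψ i) := fun i =>
    (continuous_const.sub (continuous_id.dist continuous_const)).max continuous_const
  have hψ0 : ∀ i z, 0 ≤ ψ i z := fun i z => le_max_right _ _
  have hspos : ∀ z : K, 0 < ∑ i, ψ i z := by
    intro z
    obtain ⟨i, hi⟩ := cover z
    refine Finset.sum_pos' (fun j _ => hψ0 j z) ⟨i, Finset.mem_univ i, ?_⟩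
    have h1 : 0 < δ - dist z (pts i) := by linarith
    exact h1.trans_le (le_max_left _ _)
  let φ : Fin m → C(K, ℝ) := fun i =>
    ⟨fun z => ψ i z / ∑ i', ψ i' z,
      (hψcont i).div (continuous_finset_sum _ fun j _ => hψcont j)
        fun z => (hspos z).ne'⟩
  have hφsum : ∀ z : K, ∑ i, φ i z = 1 := by
    intro z
    show ∑ i, ψ i z / ∑ i', ψ i' z = 1
    rw [← Finset.sum_div]
    exact div_self (hspos z).ne'
  have hφ0 : ∀ i (z : K), 0 ≤ φ i z := fun i z => div_nonneg (hψ0 i z) (hspos z).le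
  have hφsupp : ∀ i (z : K), φ i z ≠ 0 → dist z (pts i) < δ := by
    intro i z hne
    by_contra hge
    push_neg at hge
    apply hne
    show ψ i z / ∑ i', ψ i' z = 0
    have : ψ i z = 0 := max_eq_right (by linarith)
    rw [this, zero_div]
  -- ridge approximation of each φ i
  set η := ε8 / ((M + 1) * (m + 1)) with hηdef
  have hη : 0 < η := by positivity
  have happrox := fun i : Fin m => ridge_dense n K g hg (φ i) η hη
  choose Nfun cck θθk ωωk hφapprox using happrox
  -- assemble
  let ι := Σ i : Fin m, Fin (Nfun i)
  let Ntot := Fintype.card ι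
  let e2 : Fin Ntot ≃ ι := (Fintype.equivFin ι).symm
  let CL : ι → (C(K, ℝ) →L[ℝ] ℝ) := fun s => cck s.1 s.2 • ContinuousMap.evalCLM ℝ (pts s.1)
  let Θ2 : ι → ℝ := fun s => θθk s.1 s.2
  let Ω2 : ι → Fin n → ℝ := fun s => ωωk s.1 s.2
  have claim : ∀ f ∈ 𝒮, ∀ x : K,
      |f x - ∑ i2 : Fin Ntot, CL (e2 i2) f *
        g ((∑ j, Ω2 (e2 i2) j * (x : Fin n → ℝ) j) + Θ2 (e2 i2))| < ε := by
    intro f hf x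
    set G : Fin m → ℝ := fun i =>
      ∑ jj : Fin (Nfun i), cck i jj * g ((∑ j, ωωk i jj j * (x : Fin n → ℝ) j) + θθk i jj)
      with hGdef
    have hsum : ∑ i2 : Fin Ntot, CL (e2 i2) f *
        g ((∑ j, Ω2 (e2 i2) j * (x : Fin n → ℝ) j) + Θ2 (e2 i2))
        = ∑ i : Fin m, f (pts i) * G i := by
      rw [e2.sum_comp (fun s : ι => CL s f *
        g ((∑ j, Ω2 s j * (x : Fin n → ℝ) j) + Θ2 s))]
      rw [← Finset.univ_sigma_univ, ← Finset.sum_sigma' Finset.univ (fun _ => Finset.univ)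
        (fun i jj => CL ⟨i, jj⟩ f *
          g ((∑ j, Ω2 ⟨i, jj⟩ j * (x : Fin n → ℝ) j) + Θ2 ⟨i, jj⟩))]
      refine Finset.sum_congr rfl fun i _ => ?_
      rw [hGdef, Finset.mul_sum]
      refine Finset.sum_congr rfl fun jj _ => ?_
      show cck i jj * f (pts i) * _ = f (pts i) * (cck i jj * _)
      ring
    rw [hsum]
    -- estimate 1
    have est1 : |f x - ∑ i, f (pts i) * φ i x| ≤ 3 * ε8 := by
      have h1 : f x = ∑ i, f x * φ i x := by rw [← Finset.mul_sum, hφsum x, mul_one]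
      have h2 : f x - ∑ i, f (pts i) * φ i x = ∑ i, (f x - f (pts i)) * φ i x := by
        calc f x - ∑ i, f (pts i) * φ i x
            = ∑ i, f x * φ i x - ∑ i, f (pts i) * φ i x := by rw [← h1]
          _ = ∑ i, (f x * φ i x - f (pts i) * φ i x) := by rw [Finset.sum_sub_distrib]
          _ = ∑ i, (f x - f (pts i)) * φ i x := Finset.sum_congr rfl fun i _ => by ring
      rw [h2]
      calc |∑ i, (f x - f (pts i)) * φ i x| ≤ ∑ i, |(f x - f (pts i)) * φ i x| :=
            Finset.abs_sum_le_sum_abs _ _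
        _ ≤ ∑ i, 3 * ε8 * φ i x := by
            refine Finset.sum_le_sum fun i _ => ?_
            rw [abs_mul, abs_of_nonneg (hφ0 i x)]
            rcases eq_or_ne (φ i x) 0 with h0 | h0
            · rw [h0, mul_zero, mul_zero]
            · exact mul_le_mul_of_nonneg_right
                (equic f hf x (pts i) (hφsupp i x h0)).le (hφ0 i x)
        _ = 3 * ε8 := by rw [← Finset.mul_sum, hφsum x, mul_one]
    -- estimate 2
    have est2 : |∑ i, f (pts i) * (φ i x - G i)| ≤ ε8 := by
      calc |∑ i, f (pts i) * (φ i x - G i)| ≤ ∑ i, |f (pts i) * (φ i x - G i)| :=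
            Finset.abs_sum_le_sum_abs _ _
        _ ≤ ∑ _i : Fin m, M * η := by
            refine Finset.sum_le_sum fun i _ => ?_
            rw [abs_mul]
            exact mul_le_mul (hMb f hf (pts i)) (hφapprox i x).le (abs_nonneg _) hM0
        _ = m * (M * η) := by
            rw [Finset.sum_const, Finset.card_univ, Fintype.card_fin, nsmul_eq_mul]
        _ ≤ ε8 := by
            have hm0 : (0:ℝ) ≤ (m:ℝ) := Nat.cast_nonneg m
            have hpos : (0:ℝ) < (M + 1) * ((m:ℝ) + 1) := by positivity
            rw [hηdef, show (m:ℝ) * (M * (ε8 / ((M + 1) * ((m:ℝ) + 1))))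
              = ((m:ℝ) * M) * ε8 / ((M + 1) * ((m:ℝ) + 1)) from by ring,
              div_le_iff₀ hpos]
            nlinarith [mul_nonneg hε8.le hM0, mul_nonneg hε8.le hm0]
    have hdecomp : f x - ∑ i, f (pts i) * G i
        = (f x - ∑ i, f (pts i) * φ i x) + ∑ i, f (pts i) * (φ i x - G i) := by
      have hh : ∑ i, f (pts i) * (φ i x - G i)
          = ∑ i, f (pts i) * φ i x - ∑ i, f (pts i) * G i := by
        rw [← Finset.sum_sub_distrib]
        exact Finset.sum_congr rfl fun i _ => by ring
      rw [hh]; ring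
    rw [hdecomp]
    calc |(f x - ∑ i, f (pts i) * φ i x) + ∑ i, f (pts i) * (φ i x - G i)|
        ≤ |f x - ∑ i, f (pts i) * φ i x| + |∑ i, f (pts i) * (φ i x - G i)| := abs_add_le _ _
      _ ≤ 3 * ε8 + ε8 := add_le_add est1 est2
      _ < ε := by rw [hε8def]; linarith
  rcases Nat.eq_zero_or_pos Ntot with hN0 | hNpos
  · refine ⟨1, one_pos, 0, 0, 0, fun f hf x => ?_⟩
    have h0 := claim f hf x
    haveI : IsEmpty (Fin Ntot) := by rw [hN0]; exact Fin.isEmpty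
    rw [Finset.univ_eq_empty, Finset.sum_empty, sub_zero] at h0
    simpa using h0
  · exact ⟨Ntot, hNpos, fun i2 => Θ2 (e2 i2), fun i2 => Ω2 (e2 i2),
      fun i2 => CL (e2 i2), claim⟩
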